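/- The space Y = ⋃_{n≥1} { (y_k) ∈ [0,1]^ℕ : y_n = 1 and y_k = 0 for all k > n } (subspace of the Hilbert cube) is neither arcwise connected nor locally arcwise connected. -/

import Mathlib

open unitInterval

def FiniteLevels : Set (ℕ → I) :=
  {y | ∃ n : ℕ, y n = 1 ∧ ∀ k > n, y k = (0 : I)}

open Set Filter Topology

/-- IVT-type crossing lemma: the last time `g` is `≤ 1/2` before a point where it is large. -/
lemma crossing_aux (g : ℝ → ℝ) (hg : Continuous g) {u v : ℝ} (huv : u < v)
    (hu : g u ≤ 1/2) (hv : 1/2 ≤ g v) :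
    ∃ w, u ≤ w ∧ w ≤ v ∧ g w = 1/2 ∧ ∀ x ∈ Icc w v, 1/2 ≤ g x := by
  set S : Set ℝ := {x | x ∈ Icc u v ∧ g x ≤ 1/2} with hS
  have hSc : IsClosed S := (isClosed_Icc.inter (isClosed_le hg continuous_const) : _)
  have hSne : S.Nonempty := ⟨u, ⟨le_refl u, huv.le⟩, hu⟩
  have hSbdd : BddAbove S := ⟨v, fun x hx => hx.1.2⟩
  set w := sSup S with hw
  have hwS : w ∈ S := hSc.csSup_mem hSne hSbdd
  have hwu : u ≤ w := hwS.1.1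
  have hwv : w ≤ v := hwS.1.2
  have hgt : ∀ x, w < x → x ≤ v → 1/2 < g x := by
    intro x hx hxv
    by_contra h
    push_neg at h
    exact absurd (le_csSup hSbdd ⟨⟨hwu.trans hx.le, hxv⟩, h⟩) (not_le.2 hx)
  have hge : ∀ x ∈ Icc w v, 1/2 ≤ g x := by
    rintro x ⟨hx1, hx2⟩
    rcases eq_or_lt_of_le hx1 with heq | h
    · -- x = w, show 1/2 ≤ g w
      rw [← heq]
      rcases eq_or_lt_of_le hwv with heq2 | hlt
      · rw [heq2]; exact hv
      · have hne : (𝓝[>] w).NeBot := nhdsGT_neBot w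
        have htend : Tendsto g (𝓝[>] w) (𝓝 (g w)) :=
          (hg.tendsto w).mono_left nhdsWithin_le_nhds
        refine ge_of_tendsto htend ?_
        have hIoc : Ioc w v ∈ 𝓝[>] w := by
          rw [mem_nhdsWithin]
          exact ⟨Iio v, isOpen_Iio, hlt, fun y hy => ⟨hy.2, le_of_lt hy.1⟩⟩
        filter_upwards [hIoc] with y hy
        exact (hgt y hy.1 hy.2).le
    · exact (hgt x h hx2).le
  exact ⟨w, hwu, hwv, le_antisymm hwS.2 (hge w ⟨le_refl w, hwv⟩), hge⟩

lemma crossing_aux' (g : ℝ → ℝ) (hg : Continuous g) {u v : ℝ} (huv : u < v)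
    (hu : 1/2 ≤ g u) (hv : g v ≤ 1/2) :
    ∃ w, u ≤ w ∧ w ≤ v ∧ g w = 1/2 ∧ ∀ x ∈ Icc u w, 1/2 ≤ g x := by
  obtain ⟨w, h1, h2, h3, h4⟩ :=
    crossing_aux (fun x => g (u + v - x)) (hg.comp (by continuity)) huv
      (by simpa using hv) (by simpa using hu)
  refine ⟨u + v - w, by linarith, by linarith, by simpa using h3, ?_⟩
  rintro x ⟨hx1, hx2⟩
  have := h4 (u + v - x) ⟨by linarith, by linarith⟩
  simpa using this

/-- Core lemma: a continuous family over `[0,1]` into the "finite levels" set cannot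
contain points of two different levels. -/
lemma no_two_levels (f : ℝ → ℕ → ℝ) (hf : ∀ j, Continuous fun u => f u j)
    (hY : ∀ u ∈ Icc (0:ℝ) 1, ∃ n, f u n = 1 ∧ ∀ j > n, f u j = 0)
    {t s : ℝ} (ht : t ∈ Icc (0:ℝ) 1) (hs : s ∈ Icc (0:ℝ) 1)
    {n m : ℕ} (hn : f t n = 1 ∧ ∀ j > n, f t j = 0)
    (hm : f s m = 1 ∧ ∀ j > m, f s j = 0) (hnm : n < m) : False := by
  set Lvl : ℝ → ℕ → Prop := fun u c => f u c = 1 ∧ ∀ j > c, f u j = 0 with hLvl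
  set P : ℝ → ℝ → ℕ → Prop := fun a b k =>
    0 ≤ a ∧ a ≤ b ∧ b ≤ 1 ∧ (∀ u ∈ Icc a b, 1/2 ≤ f u k) ∧
    (∃ t₀ ∈ Icc a b, Lvl t₀ k) ∧ (∃ s₀ ∈ Icc a b, ∃ c, k < c ∧ Lvl s₀ c) with hP
  -- the descent step
  have key : ∀ a b k, 0 ≤ a → a ≤ b → b ≤ 1 →
      (∃ t₀ ∈ Icc a b, Lvl t₀ k) → (∃ s₀ ∈ Icc a b, ∃ c, k < c ∧ Lvl s₀ c) →
      ∃ a' b' k', a ≤ a' ∧ b' ≤ b ∧ k < k' ∧ P a' b' k' := by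
    rintro a b k ha hab hb ⟨t₀, ht₀I, ht₀⟩ ⟨s₀, hs₀I, c, hkc, hs₀⟩
    have ht₀c : f t₀ c = 0 := ht₀.2 c hkc
    have hs₀c : f s₀ c = 1 := hs₀.1
    have hlvlgt : ∀ w, 0 ≤ w → w ≤ 1 → f w c = 1/2 → ∃ c', c < c' ∧ Lvl w c' := by
      intro w hw0 hw1 hwc
      obtain ⟨c', h1, h2⟩ := hY w ⟨hw0, hw1⟩
      refine ⟨c', ?_, h1, h2⟩
      rcases Nat.lt_trichotomy c c' with h | rfl | h
      · exact h
      · rw [h1] at hwc; norm_num at hwc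
      · rw [h2 c h] at hwc; norm_num at hwc
    have hts : t₀ ≠ s₀ := by
      rintro rfl; rw [ht₀c] at hs₀c; norm_num at hs₀c
    rcases hts.lt_or_gt with hlt | hlt
    · obtain ⟨w, hw1, hw2, hw3, hw4⟩ := crossing_aux (fun u => f u c) (hf c) hlt
        (show f t₀ c ≤ 1/2 by rw [ht₀c]; norm_num)
        (show 1/2 ≤ f s₀ c by rw [hs₀c]; norm_num)
      have hw0 : 0 ≤ w := le_trans (le_trans ha ht₀I.1) hw1
      have hwb : w ≤ b := hw2.trans hs₀I.2
      obtain ⟨c', hcc', hc'⟩ := hlvlgt w hw0 (hwb.trans hb) hw3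
      refine ⟨w, s₀, c, le_trans ht₀I.1 hw1, hs₀I.2, hkc,
        hw0, hw2, hs₀I.2.trans hb, hw4,
        ⟨s₀, ⟨hw2, le_refl _⟩, hs₀⟩, ⟨w, ⟨le_refl _, hw2⟩, c', hcc', hc'⟩⟩
    · obtain ⟨w, hw1, hw2, hw3, hw4⟩ := crossing_aux' (fun u => f u c) (hf c) hlt
        (show 1/2 ≤ f s₀ c by rw [hs₀c]; norm_num)
        (show f t₀ c ≤ 1/2 by rw [ht₀c]; norm_num)
      have hw0 : 0 ≤ w := le_trans (le_trans ha hs₀I.1) hw1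
      have hwb : w ≤ b := hw2.trans ht₀I.2
      obtain ⟨c', hcc', hc'⟩ := hlvlgt w hw0 (hwb.trans hb) hw3
      refine ⟨s₀, w, c, hs₀I.1, hwb, hkc,
        le_trans ha hs₀I.1, hw1, hwb.trans hb, hw4,
        ⟨s₀, ⟨le_refl _, hw1⟩, hs₀⟩, ⟨w, ⟨hw1, le_refl _⟩, c', hcc', hc'⟩⟩
  -- base case
  obtain ⟨a₀, b₀, k₀, _, _, hk₀, hP₀⟩ :=
    key (min t s) (max t s) n (le_min ht.1 hs.1) (min_le_max) (max_le ht.2 hs.2)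
      ⟨t, ⟨min_le_left _ _, le_max_left _ _⟩, hn⟩
      ⟨s, ⟨min_le_right _ _, le_max_right _ _⟩, m, hnm, hm⟩
  -- iterate
  have key2 : ∀ x : {p : ℝ × ℝ × ℕ // P p.1 p.2.1 p.2.2},
      ∃ y : {p : ℝ × ℝ × ℕ // P p.1 p.2.1 p.2.2},
        x.1.1 ≤ y.1.1 ∧ y.1.2.1 ≤ x.1.2.1 ∧ x.1.2.2 < y.1.2.2 := by
    rintro ⟨⟨a, b, k⟩, ha, hab, hb, hhalf, hT, hS⟩
    obtain ⟨a', b', k', h1, h2, h3, h4⟩ := key a b k ha hab hb hT hS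
    exact ⟨⟨⟨a', b', k'⟩, h4⟩, h1, h2, h3⟩
  choose F hF1 hF2 hF3 using key2
  set seq : ℕ → {p : ℝ × ℝ × ℕ // P p.1 p.2.1 p.2.2} :=
    fun j => F^[j] ⟨⟨a₀, b₀, k₀⟩, hP₀⟩ with hseq
  have hseqS : ∀ j, seq (j + 1) = F (seq j) := by
    intro j; simp only [hseq, Function.iterate_succ_apply']
  set A : ℕ → ℝ := fun j => (seq j).1.1 with hA
  set B : ℕ → ℝ := fun j => (seq j).1.2.1 with hB
  set K : ℕ → ℕ := fun j => (seq j).1.2.2 with hK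
  have hAmono : Monotone A := monotone_nat_of_le_succ fun j => by
    simp only [hA, hseqS]; exact hF1 (seq j)
  have hBanti : Antitone B := antitone_nat_of_succ_le fun j => by
    simp only [hB, hseqS]; exact hF2 (seq j)
  have hKmono : StrictMono K := strictMono_nat_of_lt_succ fun j => by
    simp only [hK, hseqS]; exact hF3 (seq j)
  have hKle : ∀ j, j ≤ K j := by
    intro j; induction j with
    | zero => exact Nat.zero_le _
    | succ j ih => exact Nat.succ_le_of_lt (lt_of_le_of_lt ih (hKmono (Nat.lt_succ_self j)))
  have hPj : ∀ j, P (A j) (B j) (K j) := fun j => (seq j).2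
  have hAB : ∀ i j, A i ≤ B j := by
    intro i j
    rcases le_total i j with h | h
    · exact (hAmono h).trans (hPj j).2.1
    · exact (hPj i).2.1.trans (hBanti h)
  have hbdd : BddAbove (range A) := ⟨B 0, by rintro x ⟨j, rfl⟩; exact hAB j 0⟩
  set tb := sSup (range A) with htb
  have htb1 : ∀ j, A j ≤ tb := fun j => le_csSup hbdd (mem_range_self j)
  have htb2 : ∀ j, tb ≤ B j := fun j =>
    csSup_le (range_nonempty A) (by rintro x ⟨i, rfl⟩; exact hAB i j)
  have htbI : tb ∈ Icc (0:ℝ) 1 :=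
    ⟨(hPj 0).1.trans (htb1 0), (htb2 0).trans (hPj 0).2.2.1⟩
  obtain ⟨M, hM1, hM2⟩ := hY tb htbI
  have h5 : 1/2 ≤ f tb (K (M + 1)) :=
    (hPj (M + 1)).2.2.2.1 tb ⟨htb1 _, htb2 _⟩
  have h6 : f tb (K (M + 1)) = 0 :=
    hM2 _ (lt_of_lt_of_le (Nat.lt_succ_self M) (hKle (M + 1)))
  rw [h6] at h5; norm_num at h5

/-- Any path inside `FiniteLevels` stays within a single level. -/
lemma level_const {γ : I → (ℕ → I)} (hc : Continuous γ)
    (hY : ∀ t, γ t ∈ FiniteLevels) {t₁ t₂ : I} {n₁ n₂ : ℕ}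
    (h₁ : γ t₁ n₁ = 1 ∧ ∀ k > n₁, γ t₁ k = 0)
    (h₂ : γ t₂ n₂ = 1 ∧ ∀ k > n₂, γ t₂ k = 0) : n₁ = n₂ := by
  set f : ℝ → ℕ → ℝ := fun u j => (γ (projIcc 0 1 zero_le_one u) j : ℝ) with hfdef
  have hf : ∀ j, Continuous fun u => f u j :=
    fun j => continuous_subtype_val.comp
      ((continuous_apply j).comp (hc.comp continuous_projIcc))
  have hY' : ∀ u ∈ Icc (0:ℝ) 1, ∃ n, f u n = 1 ∧ ∀ j > n, f u j = 0 := by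
    intro u _
    obtain ⟨n, h1, h2⟩ := hY (projIcc 0 1 zero_le_one u)
    exact ⟨n, by rw [hfdef]; simp [h1], fun j hj => by rw [hfdef]; simp [h2 j hj]⟩
  have hval : ∀ (t : I) (j : ℕ), f (t : ℝ) j = (γ t j : ℝ) := by
    intro t j; rw [hfdef]; simp [projIcc_val]
  have h₁' : f (t₁ : ℝ) n₁ = 1 ∧ ∀ j > n₁, f (t₁ : ℝ) j = 0 :=
    ⟨by rw [hval, h₁.1]; rfl, fun j hj => by rw [hval, h₁.2 j hj]; rfl⟩
  have h₂' : f (t₂ : ℝ) n₂ = 1 ∧ ∀ j > n₂, f (t₂ : ℝ) j = 0 :=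
    ⟨by rw [hval, h₂.1]; rfl, fun j hj => by rw [hval, h₂.2 j hj]; rfl⟩
  rcases Nat.lt_trichotomy n₁ n₂ with h | h | h
  · exact absurd (no_two_levels f hf hY' t₁.2 t₂.2 h₁' h₂' h) not_false
  · exact h
  · exact absurd (no_two_levels f hf hY' t₂.2 t₁.2 h₂' h₁' h) not_false

/-- The level-0 base point. -/
def fl0 : ℕ → I := fun k => if k = 0 then 1 else 0

lemma fl0_lvl : fl0 0 = 1 ∧ ∀ k > 0, fl0 k = 0 :=
  ⟨if_pos rfl, fun k hk => if_neg (Nat.pos_iff_ne_zero.mp hk)⟩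

lemma fl0_mem : fl0 ∈ FiniteLevels := ⟨0, fl0_lvl⟩

/-- The level-m points converging to `fl0`. -/
def flm (m : ℕ) : ℕ → I := fun k => if k = 0 ∨ k = m then 1 else 0

lemma flm_lvl (m : ℕ) (hm : 0 < m) : flm m m = 1 ∧ ∀ k > m, flm m k = 0 :=
  ⟨if_pos (Or.inr rfl), fun k hk =>
    if_neg (by push_neg; exact ⟨Nat.pos_iff_ne_zero.mp (hm.trans hk), Nat.ne_of_gt hk⟩)⟩

lemma flm_mem (m : ℕ) (hm : 0 < m) : flm m ∈ FiniteLevels := ⟨m, flm_lvl m hm⟩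

/-- A joined pair in FiniteLevels has equal levels; helper extracting a contradiction. -/
lemma no_joined_diff_levels {x y : ↥FiniteLevels}
    (hj : Joined x y) {n m : ℕ}
    (hx : (x : ℕ → I) n = 1 ∧ ∀ k > n, (x : ℕ → I) k = 0)
    (hy : (y : ℕ → I) m = 1 ∧ ∀ k > m, (y : ℕ → I) k = 0) : n = m := by
  obtain ⟨p⟩ := hj
  set γ : I → (ℕ → I) := fun t => ((p t : ↥FiniteLevels) : ℕ → I) with hγ
  have hc : Continuous γ := continuous_subtype_val.comp p.continuous
  have hYγ : ∀ t, γ t ∈ FiniteLevels := fun t => (p t).2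
  have h0 : γ 0 = (x : ℕ → I) := by rw [hγ]; simp
  have h1 : γ 1 = (y : ℕ → I) := by rw [hγ]; simp
  exact level_const hc hYγ (t₁ := 0) (t₂ := 1)
    (by rw [h0]; exact hx) (by rw [h1]; exact hy)

/-- The subspace `Y` of the Hilbert cube consisting of sequences having some coordinate `1`
with all later coordinates `0` is neither arcwise connected nor locally arcwise connected. -/
theorem finiteLevels_not_pathConnected_nor_locPathConnected :
    ¬ PathConnectedSpace FiniteLevels ∧ ¬ LocPathConnectedSpace FiniteLevels := by
  have hx0 : fl0 ∈ FiniteLevels := fl0_mem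
  have hx1 : flm 1 ∈ FiniteLevels := flm_mem 1 Nat.one_pos
  constructor
  · intro h
    have hj : Joined (⟨fl0, hx0⟩ : ↥FiniteLevels) ⟨flm 1, hx1⟩ := h.joined _ _
    have := no_joined_diff_levels (n := 0) (m := 1) hj fl0_lvl (flm_lvl 1 Nat.one_pos)
    exact absurd this (by norm_num)
  · intro h
    -- the sequence flm m tends to fl0
    have htend : Filter.Tendsto (fun m => flm (m + 1)) Filter.atTop (𝓝 fl0) := by
      rw [tendsto_pi_nhds]
      intro k
      apply Filter.Tendsto.congr' (f₁ := fun _ => fl0 k)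
      · filter_upwards [Filter.eventually_ge_atTop k] with m hm
        rcases Nat.eq_zero_or_pos k with rfl | hk
        · simp [flm, fl0]
        · have : k ≠ m + 1 := by omega
          simp [flm, fl0, Nat.pos_iff_ne_zero.mp hk, this]
      · exact tendsto_const_nhds
    have htend' : Filter.Tendsto
        (fun m => (⟨flm (m + 1), flm_mem (m + 1) (Nat.succ_pos m)⟩ : ↥FiniteLevels))
        Filter.atTop (𝓝 (⟨fl0, hx0⟩ : ↥FiniteLevels)) := by
      rw [Topology.IsEmbedding.subtypeVal.tendsto_nhds_iff]
      exact htend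
    obtain ⟨U, ⟨hU, hUpc⟩, -⟩ :=
      (@path_connected_basis _ _ h (⟨fl0, hx0⟩ : ↥FiniteLevels)).mem_iff.mp
        (Filter.univ_mem : (univ : Set ↥FiniteLevels) ∈ 𝓝 _)
    have hev : ∀ᶠ m in Filter.atTop,
        (⟨flm (m + 1), flm_mem (m + 1) (Nat.succ_pos m)⟩ : ↥FiniteLevels) ∈ U := htend' hU
    obtain ⟨m, hmU⟩ := hev.exists
    have hAU : (⟨fl0, hx0⟩ : ↥FiniteLevels) ∈ U := mem_of_mem_nhds hU
    have hj : Joined (⟨fl0, hx0⟩ : ↥FiniteLevels)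
        ⟨flm (m + 1), flm_mem (m + 1) (Nat.succ_pos m)⟩ :=
      (hUpc.joinedIn _ hAU _ hmU).joined
    have := no_joined_diff_levels (n := 0) (m := m + 1) hj fl0_lvl (flm_lvl (m + 1) (Nat.succ_pos m))
    simp at this
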